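/- Let α, δ ∈ ℝ, β > 0, and let λ ≥ 0 satisfy λ = 0 if α² + 3βδ > 0 and λ > 2√(−(α² + 3βδ))/(3β) if α² + 3βδ ≤ 0. Set c₋ := (α − √(3β²λ² + α² + 3βδ))/(3β) and s(m) := √(3(m − α/(3β))² − (α² + 3βδ)/(3β²)) for m ≤ c₋. Then there exists a constant C > 0, depending only on α, β, δ, λ, such that for every measurable f : (0, ∞) → ℂ with ∫₀^∞ |f(x)|² dx < ∞, one has ∫_{−∞}^{c₋} |∫₀^∞ e^{−x·s(m)} f(x) dx|² dm ≤ C ∫₀^∞ |f(x)|² dx. -/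

import Mathlib

open MeasureTheory

/-- `c₋ = (α − √(3β²λ² + α² + 3βδ))/(3β)`. -/
noncomputable def cMinus (α β δ lam : ℝ) : ℝ :=
  (α - Real.sqrt (3 * β ^ 2 * lam ^ 2 + α ^ 2 + 3 * β * δ)) / (3 * β)

/-- `s(m) = √(3(m − α/(3β))² − (α² + 3βδ)/(3β²))`. -/
noncomputable def sHNLS (α β δ : ℝ) (m : ℝ) : ℝ :=
  Real.sqrt (3 * (m - α / (3 * β)) ^ 2 - (α ^ 2 + 3 * β * δ) / (3 * β ^ 2))

namespace ModLapAux

open Set Real ENNReal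

lemma integral_half {b : ℝ} (hb : 0 < b) :
    ∫ x in Ioi (0:ℝ), x ^ (-(1/2) : ℝ) * Real.exp (-(b * x))
      = Real.sqrt π * b ^ (-(1/2) : ℝ) := by
  have h := integral_rpow_mul_exp_neg_mul_rpow (p := 1) (q := -(1/2)) (b := b)
    one_pos (by norm_num) hb
  simp only [Real.rpow_one, neg_mul] at h
  rw [show (-(-(1/2:ℝ) + 1) / 1) = -(1/2:ℝ) by norm_num,
    show ((-(1/2:ℝ) + 1) / 1) = (1/2:ℝ) by norm_num, Real.Gamma_one_half_eq] at h
  rw [h]; ring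

lemma integrableOn_half {b : ℝ} (hb : 0 < b) :
    IntegrableOn (fun x : ℝ => x ^ (-(1/2) : ℝ) * Real.exp (-(b * x))) (Ioi 0) := by
  have h := integrableOn_rpow_mul_exp_neg_mul_rpow (p := 1) (s := -(1/2)) (b := b)
    (by norm_num) one_pos hb
  refine h.congr_fun (fun x hx => ?_) measurableSet_Ioi
  dsimp only
  rw [Real.rpow_one, neg_mul]

lemma lintegral_half {b : ℝ} (hb : 0 < b) :
    ∫⁻ x in Ioi (0:ℝ), ENNReal.ofReal (x ^ (-(1/2) : ℝ) * Real.exp (-(b * x)))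
      = ENNReal.ofReal (Real.sqrt π * b ^ (-(1/2) : ℝ)) := by
  rw [← integral_half hb, ofReal_integral_eq_lintegral_ofReal (integrableOn_half hb)]
  filter_upwards [ae_restrict_mem measurableSet_Ioi] with x hx
  have hx' : (0:ℝ) < x := hx
  positivity

lemma lintegral_image_eq_lintegral_abs_deriv_mul' {s : Set ℝ} {f f' : ℝ → ℝ}
    (hs : MeasurableSet s) (hf' : ∀ x ∈ s, HasDerivWithinAt f (f' x) s x)
    (hf : InjOn f s) (g : ℝ → ℝ≥0∞) :
    ∫⁻ x in f '' s, g x = ∫⁻ x in s, ENNReal.ofReal |f' x| * g (f x) := by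
  simpa only [ContinuousLinearMap.det_toSpanSingleton] using
    lintegral_image_eq_lintegral_abs_det_fderiv_mul volume hs
      (fun x hx => (hf' x hx).hasFDerivWithinAt) hf g

lemma stepA {t : ℝ} (ht : 0 < t) (f : ℝ → ℂ) (hf : Measurable f) :
    ENNReal.ofReal (‖∫ x in Ioi (0:ℝ), ((Real.exp (-(x * t)) : ℝ) : ℂ) * f x‖ ^ 2)
      ≤ ENNReal.ofReal (Real.sqrt π * t ^ (-(1/2) : ℝ)) *
        ∫⁻ x in Ioi (0:ℝ),
          ENNReal.ofReal (Real.exp (-(x * t)) * x ^ ((1/2) : ℝ)) *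
            ENNReal.ofReal (‖f x‖ ^ 2) := by
  have h22 : ∀ y : ℝ≥0∞, y ^ (2:ℝ) = y * y := fun y => by
    rw [show (2:ℝ) = ((2:ℕ):ℝ) by norm_num, ENNReal.rpow_natCast]; ring
  set μ := volume.restrict (Ioi (0:ℝ)) with hμ
  set A : ℝ → ℝ≥0∞ := fun x => ENNReal.ofReal (Real.exp (-(x * t) / 2) * x ^ (-(1/4) : ℝ))
    with hA
  set B : ℝ → ℝ≥0∞ := fun x =>
    ENNReal.ofReal (Real.exp (-(x * t) / 2) * x ^ ((1/4) : ℝ)) * (‖f x‖₊ : ℝ≥0∞) with hB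
  have hAm : Measurable A := by fun_prop
  have hBm : Measurable B := by fun_prop
  have hpt : ∀ x ∈ Ioi (0:ℝ),
      (‖((Real.exp (-(x * t)) : ℝ) : ℂ) * f x‖₊ : ℝ≥0∞) = A x * B x := by
    intro x hx
    have hx' : (0:ℝ) < x := hx
    have h1 : Real.exp (-(x * t) / 2) * Real.exp (-(x * t) / 2) = Real.exp (-(x * t)) := by
      rw [← Real.exp_add]; ring_nf
    have h2 : x ^ (-(1/4) : ℝ) * x ^ ((1/4) : ℝ) = 1 := by
      rw [← Real.rpow_add hx']; norm_num
    have hsplit : ‖((Real.exp (-(x * t)) : ℝ) : ℂ) * f x‖₊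
        = ‖Real.exp (-(x * t))‖₊ * ‖f x‖₊ := by
      rw [nnnorm_mul, Complex.nnnorm_real]
    rw [hsplit, hA, hB]
    push_cast
    rw [← enorm_eq_nnnorm, ← ofReal_norm (Real.exp (-(x*t))), Real.norm_eq_abs,
      abs_of_pos (Real.exp_pos _), ← mul_assoc, ← ENNReal.ofReal_mul (by positivity)]
    congr 2
    calc Real.exp (-(x*t)) = (Real.exp (-(x * t) / 2) * Real.exp (-(x * t) / 2)) *
          (x ^ (-(1/4) : ℝ) * x ^ ((1/4) : ℝ)) := by rw [h1, h2, mul_one]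
      _ = Real.exp (-(x * t) / 2) * x ^ (-(1/4) : ℝ) *
          (Real.exp (-(x * t) / 2) * x ^ ((1/4) : ℝ)) := by ring
  have hconj : Real.HolderConjugate 2 2 := Real.HolderConjugate.two_two
  have hCS := ENNReal.lintegral_mul_le_Lp_mul_Lq μ hconj hAm.aemeasurable hBm.aemeasurable
  have hA2 : ∫⁻ x, A x ^ (2:ℝ) ∂μ = ENNReal.ofReal (Real.sqrt π * t ^ (-(1/2) : ℝ)) := by
    rw [← lintegral_half ht, hμ]
    refine setLIntegral_congr_fun measurableSet_Ioi (fun x hx => ?_)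
    have hx' : (0:ℝ) < x := hx
    rw [h22, hA, ← ENNReal.ofReal_mul (by positivity)]
    congr 1
    rw [show Real.exp (-(x * t) / 2) * x ^ (-(1/4) : ℝ) *
          (Real.exp (-(x * t) / 2) * x ^ (-(1/4) : ℝ))
        = (Real.exp (-(x * t) / 2) * Real.exp (-(x * t) / 2)) *
          (x ^ (-(1/4) : ℝ) * x ^ (-(1/4) : ℝ)) from by ring,
      ← Real.exp_add, ← Real.rpow_add hx',
      show (-(x*t)/2 + -(x*t)/2) = -(t*x) from by ring,
      show (-(1/4:ℝ) + -(1/4:ℝ)) = -(1/2:ℝ) from by norm_num]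
    ring
  have hB2 : ∫⁻ x, B x ^ (2:ℝ) ∂μ
      = ∫⁻ x, ENNReal.ofReal (Real.exp (-(x * t)) * x ^ ((1/2) : ℝ)) *
          ENNReal.ofReal (‖f x‖ ^ 2) ∂μ := by
    rw [hμ]
    refine setLIntegral_congr_fun measurableSet_Ioi (fun x hx => ?_)
    have hx' : (0:ℝ) < x := hx
    rw [h22, hB,
      show ENNReal.ofReal (Real.exp (-(x * t) / 2) * x ^ ((1/4) : ℝ)) * (‖f x‖₊ : ℝ≥0∞) *
        (ENNReal.ofReal (Real.exp (-(x * t) / 2) * x ^ ((1/4) : ℝ)) * (‖f x‖₊ : ℝ≥0∞))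
        = (ENNReal.ofReal (Real.exp (-(x * t) / 2) * x ^ ((1/4) : ℝ)) *
           ENNReal.ofReal (Real.exp (-(x * t) / 2) * x ^ ((1/4) : ℝ))) *
          ((‖f x‖₊ : ℝ≥0∞) * (‖f x‖₊ : ℝ≥0∞)) from by ring,
      ← ENNReal.ofReal_mul (by positivity)]
    congr 1
    · congr 1
      rw [show Real.exp (-(x * t) / 2) * x ^ ((1/4) : ℝ) *
            (Real.exp (-(x * t) / 2) * x ^ ((1/4) : ℝ))
          = (Real.exp (-(x * t) / 2) * Real.exp (-(x * t) / 2)) *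
            (x ^ ((1/4) : ℝ) * x ^ ((1/4) : ℝ)) from by ring,
        ← Real.exp_add, ← Real.rpow_add hx',
        show (-(x*t)/2 + -(x*t)/2) = -(x*t) from by ring,
        show ((1/4:ℝ) + (1/4:ℝ)) = (1/2:ℝ) from by norm_num]
    · rw [ENNReal.ofReal_pow (norm_nonneg _), ofReal_norm, enorm_eq_nnnorm]; ring
  rw [← hA2, ← hB2]
  calc ENNReal.ofReal (‖∫ x, ((Real.exp (-(x * t)) : ℝ) : ℂ) * f x ∂μ‖ ^ 2)
      = (‖∫ x, ((Real.exp (-(x * t)) : ℝ) : ℂ) * f x ∂μ‖₊ : ℝ≥0∞) ^ 2 := by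
        rw [ENNReal.ofReal_pow (norm_nonneg _), ofReal_norm, enorm_eq_nnnorm]
    _ ≤ (∫⁻ x, ‖((Real.exp (-(x * t)) : ℝ) : ℂ) * f x‖₊ ∂μ) ^ 2 :=
        pow_le_pow_left₀ zero_le (enorm_integral_le_lintegral_enorm _) 2
    _ = (∫⁻ x, A x * B x ∂μ) ^ 2 := by
        congr 1
        rw [hμ]
        exact setLIntegral_congr_fun measurableSet_Ioi
          (fun x hx => hpt x hx)
    _ ≤ ((∫⁻ x, A x ^ (2:ℝ) ∂μ) ^ ((1:ℝ)/2) * (∫⁻ x, B x ^ (2:ℝ) ∂μ) ^ ((1:ℝ)/2)) ^ 2 := by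
        refine pow_le_pow_left₀ zero_le ?_ 2
        simpa [Pi.mul_apply] using hCS
    _ = (∫⁻ x, A x ^ (2:ℝ) ∂μ) * (∫⁻ x, B x ^ (2:ℝ) ∂μ) := by
        rw [mul_pow, ← ENNReal.rpow_natCast ((∫⁻ x, A x ^ (2:ℝ) ∂μ) ^ ((1:ℝ)/2)) 2,
          ← ENNReal.rpow_natCast ((∫⁻ x, B x ^ (2:ℝ) ∂μ) ^ ((1:ℝ)/2)) 2,
          ← ENNReal.rpow_mul, ← ENNReal.rpow_mul]
        norm_num

section C
variable {a B lam : ℝ}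

lemma stepC (hlam : 0 ≤ lam) (hK : 0 < lam ^ 2 + B) {M : ℝ}
    (hM : ∀ t, lam < t → t / (3 * Real.sqrt ((t ^ 2 + B) / 3)) ≤ M)
    {x : ℝ} (hx : 0 < x) :
    ∫⁻ m in Iio (a - Real.sqrt ((lam ^ 2 + B) / 3)),
        ENNReal.ofReal ((Real.sqrt (3 * (m - a) ^ 2 - B)) ^ (-(1/2) : ℝ) *
          Real.exp (-(x * Real.sqrt (3 * (m - a) ^ 2 - B))))
      ≤ ENNReal.ofReal M * ENNReal.ofReal (Real.sqrt π * x ^ (-(1/2) : ℝ)) := by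
  set φ : ℝ → ℝ := fun t => a - Real.sqrt ((t ^ 2 + B) / 3) with hφ
  set φ' : ℝ → ℝ := fun t => -(t / (3 * Real.sqrt ((t ^ 2 + B) / 3))) with hφ'
  have hu : ∀ t, lam < t → (0:ℝ) < (t ^ 2 + B) / 3 := by
    intro t ht
    have h1 : lam ^ 2 ≤ t ^ 2 := pow_le_pow_left₀ hlam ht.le 2
    have : 0 < t ^ 2 + B := lt_of_lt_of_le hK (by linarith)
    linarith
  have hderiv : ∀ t ∈ Ioi lam, HasDerivWithinAt φ (φ' t) (Ioi lam) t := by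
    intro t ht
    have hut : (0:ℝ) < (t ^ 2 + B) / 3 := hu t ht
    have h1 : HasDerivAt (fun y : ℝ => (y ^ 2 + B) / 3) (2 * t / 3) t := by
      have := ((hasDerivAt_pow 2 t).add_const B).div_const 3
      simpa using this
    have h2 : HasDerivAt (fun y : ℝ => Real.sqrt ((y ^ 2 + B) / 3))
        ((2 * t / 3) / (2 * Real.sqrt ((t ^ 2 + B) / 3))) t :=
      h1.sqrt hut.ne'
    have h3 : HasDerivAt φ (-((2 * t / 3) / (2 * Real.sqrt ((t ^ 2 + B) / 3)))) t :=
      h2.const_sub a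
    have heq : -((2 * t / 3) / (2 * Real.sqrt ((t ^ 2 + B) / 3))) = φ' t := by
      rw [hφ']
      have hs : (0:ℝ) < Real.sqrt ((t ^ 2 + B) / 3) := Real.sqrt_pos.mpr hut
      field_simp
    exact (heq ▸ h3).hasDerivWithinAt
  have hanti : StrictAntiOn φ (Ioi lam) := by
    intro t1 h1 t2 h2 h12
    have : (t1 ^ 2 + B) / 3 < (t2 ^ 2 + B) / 3 := by
      have := pow_lt_pow_left₀ h12 (le_trans hlam (le_of_lt h1)) two_ne_zero
      linarith
    have := Real.sqrt_lt_sqrt (hu t1 h1).le this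
    simp only [hφ]
    linarith
  have hinj : InjOn φ (Ioi lam) := hanti.injOn
  have himg : φ '' Ioi lam = Iio (a - Real.sqrt ((lam ^ 2 + B) / 3)) := by
    apply Set.eq_of_subset_of_subset
    · rintro m ⟨t, ht, rfl⟩
      have h1 : (lam ^ 2 + B) / 3 < (t ^ 2 + B) / 3 := by
        have := pow_lt_pow_left₀ ht hlam two_ne_zero
        linarith
      have := Real.sqrt_lt_sqrt (by positivity) h1
      simp only [hφ, mem_Iio]
      linarith
    · intro m hm
      simp only [mem_Iio] at hm
      set t := Real.sqrt (3 * (m - a) ^ 2 - B) with htdef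
      have hsq : (0:ℝ) ≤ Real.sqrt ((lam ^ 2 + B) / 3) := Real.sqrt_nonneg _
      have ham : Real.sqrt ((lam ^ 2 + B) / 3) < a - m := by linarith
      have h2 : (lam ^ 2 + B) / 3 < (a - m) ^ 2 := by
        have := pow_lt_pow_left₀ ham hsq two_ne_zero
        rwa [Real.sq_sqrt (by positivity)] at this
      have h3 : lam ^ 2 < 3 * (m - a) ^ 2 - B := by nlinarith
      have h4 : (0:ℝ) ≤ 3 * (m - a) ^ 2 - B := by nlinarith [sq_nonneg lam]
      have ht2 : t ^ 2 = 3 * (m - a) ^ 2 - B := Real.sq_sqrt h4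
      have htlam : lam < t := by
        rw [htdef]
        exact (Real.lt_sqrt hlam).mpr h3
      refine ⟨t, htlam, ?_⟩
      have : (t ^ 2 + B) / 3 = (m - a) ^ 2 := by rw [ht2]; ring
      simp only [hφ, this]
      rw [show ((m - a) ^ 2 : ℝ) = (a - m) ^ 2 from by ring,
        Real.sqrt_sq (by linarith : (0:ℝ) ≤ a - m)]
      ring
  have hcomp : ∀ t, lam < t → Real.sqrt (3 * (φ t - a) ^ 2 - B) = t := by
    intro t ht
    have hut := hu t ht
    have : (φ t - a) ^ 2 = (t ^ 2 + B) / 3 := by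
      simp only [hφ]
      rw [show a - Real.sqrt ((t ^ 2 + B) / 3) - a = -(Real.sqrt ((t ^ 2 + B) / 3)) from by ring,
        neg_pow, Real.sq_sqrt hut.le]
      ring
    rw [this, show 3 * ((t ^ 2 + B) / 3) - B = t ^ 2 from by ring,
      Real.sqrt_sq (le_trans hlam ht.le)]
  rw [← himg, lintegral_image_eq_lintegral_abs_deriv_mul' measurableSet_Ioi hderiv hinj]
  have hbound : ∫⁻ t in Ioi lam, ENNReal.ofReal |φ' t| *
        ENNReal.ofReal ((Real.sqrt (3 * (φ t - a) ^ 2 - B)) ^ (-(1/2) : ℝ) *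
          Real.exp (-(x * Real.sqrt (3 * (φ t - a) ^ 2 - B))))
      ≤ ∫⁻ t in Ioi lam, ENNReal.ofReal M *
          ENNReal.ofReal (t ^ (-(1/2) : ℝ) * Real.exp (-(x * t))) := by
    refine lintegral_mono_ae ?_
    filter_upwards [ae_restrict_mem measurableSet_Ioi] with t ht
    rw [hcomp t ht]
    refine mul_le_mul' ?_ le_rfl
    refine ENNReal.ofReal_le_ofReal ?_
    have ht0 : (0:ℝ) < t := lt_of_le_of_lt hlam ht
    have hst : (0:ℝ) < Real.sqrt ((t ^ 2 + B) / 3) := Real.sqrt_pos.mpr (hu t ht)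
    rw [hφ', abs_neg, abs_of_nonneg (by positivity)]
    exact hM t ht
  refine le_trans hbound ?_
  rw [lintegral_const_mul' _ _ ENNReal.ofReal_ne_top]
  refine mul_le_mul' le_rfl ?_
  calc ∫⁻ t in Ioi lam, ENNReal.ofReal (t ^ (-(1/2) : ℝ) * Real.exp (-(x * t)))
      ≤ ∫⁻ t in Ioi (0:ℝ), ENNReal.ofReal (t ^ (-(1/2) : ℝ) * Real.exp (-(x * t))) :=
        lintegral_mono_set (Ioi_subset_Ioi hlam)
    _ = ENNReal.ofReal (Real.sqrt π * x ^ (-(1/2) : ℝ)) := lintegral_half hx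

end C

lemma boundM {B lam : ℝ} (hlam : 0 ≤ lam) (hK : 0 < lam ^ 2 + B) :
    ∃ M : ℝ, 0 < M ∧ ∀ t, lam < t → t / (3 * Real.sqrt ((t ^ 2 + B) / 3)) ≤ M := by
  set K := lam ^ 2 + B with hKdef
  have hKB : 0 < K + |B| := by positivity
  refine ⟨Real.sqrt ((K + |B|) / (3 * K)), Real.sqrt_pos.mpr (by positivity), ?_⟩
  intro t ht
  have ht0 : 0 < t := lt_of_le_of_lt hlam ht
  have htt : lam ^ 2 ≤ t ^ 2 := pow_le_pow_left₀ hlam ht.le 2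
  have hub : 0 < t ^ 2 + B := by rw [hKdef] at hK; linarith
  have hu : 0 < (t ^ 2 + B) / 3 := by linarith
  have hsu : 0 < Real.sqrt ((t ^ 2 + B) / 3) := Real.sqrt_pos.mpr hu
  rw [Real.le_sqrt (by positivity)]
  rw [div_pow, mul_pow, Real.sq_sqrt hu.le]
  rw [div_le_div_iff₀ (by positivity) (by positivity)]
  have hKey : t ^ 2 * K ≤ (K + |B|) * (t ^ 2 + B) := by
    rcases le_or_gt 0 B with hB | hB
    · rw [abs_of_nonneg hB]; nlinarith
    · rw [abs_of_neg hB]; nlinarith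
  · nlinarith [hKey]
  · positivity

lemma hKpos {α β δ lam : ℝ} (hβ : 0 < β) (hlam0 : 0 ≤ lam)
    (hlam1 : 0 < α ^ 2 + 3 * β * δ → lam = 0)
    (hlam2 : α ^ 2 + 3 * β * δ ≤ 0 →
      2 * Real.sqrt (-(α ^ 2 + 3 * β * δ)) / (3 * β) < lam) :
    0 < lam ^ 2 + (α ^ 2 + 3 * β * δ) / (3 * β ^ 2) := by
  set X := α ^ 2 + 3 * β * δ with hX
  rcases le_or_gt X 0 with h | h
  · have hc := hlam2 h
    have hs0 : 0 ≤ Real.sqrt (-X) := Real.sqrt_nonneg _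
    have hc0 : 0 ≤ 2 * Real.sqrt (-X) / (3 * β) := by positivity
    have hlampos : 0 < lam := lt_of_le_of_lt hc0 hc
    have hsq : (Real.sqrt (-X)) ^ 2 = -X := Real.sq_sqrt (by linarith)
    have h2 : (2 * Real.sqrt (-X) / (3 * β)) ^ 2 < lam ^ 2 :=
      pow_lt_pow_left₀ hc hc0 two_ne_zero
    rw [div_pow, mul_pow, hsq] at h2
    rcases eq_or_lt_of_le h with hX0 | hXneg
    · rw [hX0, zero_div, add_zero]
      exact pow_pos hlampos 2
    · have hb2 : 0 < 3 * β ^ 2 := by positivity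
      have hb9 : 0 < (3 * β) ^ 2 := by positivity
      have h3 : 2 ^ 2 * (-X) / (3 * β) ^ 2 < lam ^ 2 := h2
      have h4 : X / (3 * β ^ 2) > -lam ^ 2 := by
        rw [gt_iff_lt, neg_lt, ← neg_div]
        rw [div_lt_iff₀ hb2]
        rw [div_lt_iff₀ hb9] at h3
        nlinarith
      linarith [h4]
  · have hB : 0 < X / (3 * β ^ 2) := by positivity
    positivity

end ModLapAux

/-- Modified Laplace transform bound, part (ii):
`∫_{−∞}^{c₋} |∫₀^∞ e^{−x·s(m)} f(x) dx|² dm ≲ ∫₀^∞ |f(x)|² dx`. -/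
theorem modified_laplace_L2_bound_ii (α β δ : ℝ) (hβ : 0 < β) (lam : ℝ)
    (hlam0 : 0 ≤ lam)
    (hlam1 : 0 < α ^ 2 + 3 * β * δ → lam = 0)
    (hlam2 : α ^ 2 + 3 * β * δ ≤ 0 →
      2 * Real.sqrt (-(α ^ 2 + 3 * β * δ)) / (3 * β) < lam) :
    ∃ C > 0, ∀ f : ℝ → ℂ, Measurable f →
      (∫⁻ x in Set.Ioi (0 : ℝ), ENNReal.ofReal (‖f x‖ ^ 2) < ⊤) →
      (∫⁻ m in Set.Iio (cMinus α β δ lam),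
          ENNReal.ofReal
            (‖∫ x in Set.Ioi (0 : ℝ),
                ((Real.exp (-(x * sHNLS α β δ m)) : ℝ) : ℂ) * f x‖ ^ 2)) ≤
        ENNReal.ofReal C *
          ∫⁻ x in Set.Ioi (0 : ℝ), ENNReal.ofReal (‖f x‖ ^ 2) := by
  classical
  set a := α / (3 * β) with ha
  set B := (α ^ 2 + 3 * β * δ) / (3 * β ^ 2) with hBdef
  have hK : 0 < lam ^ 2 + B := ModLapAux.hKpos hβ hlam0 hlam1 hlam2
  obtain ⟨M, hM0, hM⟩ := ModLapAux.boundM hlam0 hK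
  have hsfun : ∀ m, sHNLS α β δ m = Real.sqrt (3 * (m - a) ^ 2 - B) := fun m => rfl
  have hc : cMinus α β δ lam = a - Real.sqrt ((lam ^ 2 + B) / 3) := by
    rw [cMinus, ha, hBdef]
    have h1 : 3 * β ^ 2 * lam ^ 2 + α ^ 2 + 3 * β * δ
        = (3 * β) ^ 2 * ((lam ^ 2 + (α ^ 2 + 3 * β * δ) / (3 * β ^ 2)) / 3) := by
      field_simp
      ring
    rw [h1, Real.sqrt_mul (by positivity) _, Real.sqrt_sq (by positivity), sub_div,
      mul_div_cancel_left₀ _ (by positivity : (0:ℝ) < 3 * β).ne']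
  have hscont : Continuous (sHNLS α β δ) := by
    unfold sHNLS
    fun_prop
  refine ⟨Real.pi * M, by positivity, ?_⟩
  intro f hf _
  have hspos : ∀ m ∈ Set.Iio (cMinus α β δ lam), 0 < sHNLS α β δ m := by
    intro m hm
    rw [hc, Set.mem_Iio] at hm
    have hsq0 : (0:ℝ) ≤ Real.sqrt ((lam ^ 2 + B) / 3) := Real.sqrt_nonneg _
    have h2 : (lam ^ 2 + B) / 3 < (a - m) ^ 2 := by
      have := pow_lt_pow_left₀ (by linarith : Real.sqrt ((lam ^ 2 + B) / 3) < a - m)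
        hsq0 two_ne_zero
      rwa [Real.sq_sqrt (by positivity)] at this
    have h3 : 0 < 3 * (m - a) ^ 2 - B := by nlinarith [sq_nonneg lam]
    rw [hsfun m]
    exact Real.sqrt_pos.mpr h3
  set H : ℝ → ℝ → ENNReal := fun m x =>
    ENNReal.ofReal (Real.sqrt Real.pi * (sHNLS α β δ m) ^ (-(1/2) : ℝ)) *
      (ENNReal.ofReal (Real.exp (-(x * sHNLS α β δ m)) * x ^ ((1/2) : ℝ)) *
        ENNReal.ofReal (‖f x‖ ^ 2)) with hH
  have hmeas : AEMeasurable (Function.uncurry H)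
      ((volume.restrict (Set.Iio (cMinus α β δ lam))).prod (volume.restrict (Set.Ioi (0:ℝ)))) := by
    rw [hH]
    apply Measurable.aemeasurable
    fun_prop
  calc ∫⁻ m in Set.Iio (cMinus α β δ lam),
        ENNReal.ofReal (‖∫ x in Set.Ioi (0:ℝ), ((Real.exp (-(x * sHNLS α β δ m)) : ℝ) : ℂ) * f x‖ ^ 2)
      ≤ ∫⁻ m in Set.Iio (cMinus α β δ lam),
          ENNReal.ofReal (Real.sqrt Real.pi * (sHNLS α β δ m) ^ (-(1/2) : ℝ)) *
            ∫⁻ x in Set.Ioi (0:ℝ),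
              ENNReal.ofReal (Real.exp (-(x * sHNLS α β δ m)) * x ^ ((1/2) : ℝ)) *
                ENNReal.ofReal (‖f x‖ ^ 2) := by
        refine lintegral_mono_ae ?_
        filter_upwards [ae_restrict_mem measurableSet_Iio] with m hm
        exact ModLapAux.stepA (hspos m hm) f hf
    _ = ∫⁻ m in Set.Iio (cMinus α β δ lam), ∫⁻ x in Set.Ioi (0:ℝ), H m x := by
        refine lintegral_congr fun m => ?_
        rw [hH]
        exact (lintegral_const_mul' _ _ ENNReal.ofReal_ne_top).symm
    _ = ∫⁻ x in Set.Ioi (0:ℝ), ∫⁻ m in Set.Iio (cMinus α β δ lam), H m x :=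
        lintegral_lintegral_swap hmeas
    _ ≤ ∫⁻ x in Set.Ioi (0:ℝ), ENNReal.ofReal (Real.pi * M) * ENNReal.ofReal (‖f x‖ ^ 2) := by
        refine lintegral_mono_ae ?_
        filter_upwards [ae_restrict_mem measurableSet_Ioi] with x hx
        have hx' : (0:ℝ) < x := hx
        have hsm : ∀ m, (0:ℝ) ≤ (sHNLS α β δ m) ^ (-(1/2) : ℝ) :=
          fun m => Real.rpow_nonneg (Real.sqrt_nonneg _) _
        have hHre : ∀ m, H m x = (ENNReal.ofReal (Real.sqrt Real.pi) *
              ENNReal.ofReal (x ^ ((1/2) : ℝ)) * ENNReal.ofReal (‖f x‖ ^ 2)) *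
            ENNReal.ofReal ((sHNLS α β δ m) ^ (-(1/2) : ℝ) *
              Real.exp (-(x * sHNLS α β δ m))) := by
          intro m
          simp only [hH]
          rw [ENNReal.ofReal_mul (Real.sqrt_nonneg Real.pi),
            ENNReal.ofReal_mul (le_of_lt (Real.exp_pos _)),
            ENNReal.ofReal_mul (hsm m)]
          ring
        calc ∫⁻ m in Set.Iio (cMinus α β δ lam), H m x
            = (ENNReal.ofReal (Real.sqrt Real.pi) * ENNReal.ofReal (x ^ ((1/2) : ℝ)) *
                ENNReal.ofReal (‖f x‖ ^ 2)) *
              ∫⁻ m in Set.Iio (cMinus α β δ lam),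
                ENNReal.ofReal ((sHNLS α β δ m) ^ (-(1/2) : ℝ) *
                  Real.exp (-(x * sHNLS α β δ m))) := by
              simp only [hHre]
              exact lintegral_const_mul' _ _
                (by exact ENNReal.mul_ne_top (ENNReal.mul_ne_top ENNReal.ofReal_ne_top
                  ENNReal.ofReal_ne_top) ENNReal.ofReal_ne_top)
          _ ≤ (ENNReal.ofReal (Real.sqrt Real.pi) * ENNReal.ofReal (x ^ ((1/2) : ℝ)) *
                ENNReal.ofReal (‖f x‖ ^ 2)) *
              (ENNReal.ofReal M * ENNReal.ofReal (Real.sqrt Real.pi * x ^ (-(1/2) : ℝ))) := by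
              refine mul_le_mul' le_rfl ?_
              have := ModLapAux.stepC (a := a) hlam0 hK hM hx'
              rw [hc]
              simpa only [hsfun] using this
          _ = ENNReal.ofReal (Real.pi * M) * ENNReal.ofReal (‖f x‖ ^ 2) := by
              rw [← ENNReal.ofReal_mul (Real.sqrt_nonneg Real.pi),
                ← ENNReal.ofReal_mul (by positivity),
                ← ENNReal.ofReal_mul (by positivity),
                ← ENNReal.ofReal_mul (by positivity),
                ← ENNReal.ofReal_mul (by positivity)]
              congr 1
              have hxx : x ^ ((1/2) : ℝ) * x ^ (-(1/2) : ℝ) = 1 := by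
                rw [← Real.rpow_add hx']; norm_num
              have hpp : Real.sqrt Real.pi * Real.sqrt Real.pi = Real.pi :=
                Real.mul_self_sqrt Real.pi_pos.le
              calc Real.sqrt Real.pi * x ^ ((1/2) : ℝ) * ‖f x‖ ^ 2 *
                    (M * (Real.sqrt Real.pi * x ^ (-(1/2) : ℝ)))
                  = (Real.sqrt Real.pi * Real.sqrt Real.pi) * (x ^ ((1/2) : ℝ) * x ^ (-(1/2) : ℝ)) *
                    (M * ‖f x‖ ^ 2) := by ring
                _ = Real.pi * M * ‖f x‖ ^ 2 := by rw [hxx, hpp]; ring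
    _ = ENNReal.ofReal (Real.pi * M) * ∫⁻ x in Set.Ioi (0:ℝ), ENNReal.ofReal (‖f x‖ ^ 2) :=
        lintegral_const_mul' _ _ ENNReal.ofReal_ne_top
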